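/- Let X₁, …, Xₙ be independent sub-uniform random variables and let X̄ₙ = n⁻¹ Σᵢ Xᵢ. Then for every t with 0 ≤ t ≤ 1/2 and every h > 0, P(1/2 − X̄ₙ ≥ t) ≤ {2 e^{−h t} sinh(h/2) / h}ⁿ. -/

import Mathlib

open MeasureTheory Set

/-- A real-valued random variable `X` on a probability space `(Ω, P)` is *sub-uniform*
if it is dominated in the convex order by the uniform distribution `U` on `[0,1]`:
`E[h(X)] ≤ E[h(U)]` for every convex `h : ℝ → ℝ` for which both expectations exist.
(The expectation `E[h(X)]` exists, with a value in `(-∞, ∞]`, precisely when the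
negative part of `h ∘ X` is integrable; in that case the inequality
`E[h(X)] ≤ E[h(U)] < ∞` forces `h ∘ X` to be integrable.  The expectation `E[h(U)]`
always exists, since a convex function on `ℝ` is continuous, hence bounded on `[0,1]`.) -/
def SubUniform {Ω : Type*} [MeasurableSpace Ω] (P : Measure Ω) (X : Ω → ℝ) : Prop :=
  ∀ h : ℝ → ℝ, ConvexOn ℝ Set.univ h →
    Integrable (fun ω => max (-(h (X ω))) 0) P →
    Integrable (fun ω => h (X ω)) P ∧
      ∫ ω, h (X ω) ∂P ≤ ∫ x in Set.Icc (0:ℝ) 1, h x ∂volume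

/-- The convexity of `x ↦ exp (a - s*x)`. -/
lemma convexOn_exp_affine (a s : ℝ) : ConvexOn ℝ Set.univ (fun x : ℝ => Real.exp (a - s * x)) := by
  have haff : ∀ x : ℝ, a - s * x = (-s) * (x - 0) + (a - s * 0) := by intro x; ring
  have := convexOn_exp.comp_affineMap (AffineMap.mk' (fun x : ℝ => a - s * x)
    ((-s) • LinearMap.id) 0 haff)
  simpa [Function.comp_def] using this

/-- The integral of `exp (s/2 - s*x)` over `[0,1]`. -/
lemma integral_exp_affine_Icc {s : ℝ} (hs : 0 < s) :
    ∫ x in Set.Icc (0:ℝ) 1, Real.exp (s/2 - s * x) ∂volume = 2 * Real.sinh (s/2) / s := by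
  have hderiv : ∀ x ∈ Set.uIcc (0:ℝ) 1, HasDerivAt (fun y => -Real.exp (s/2 - s*y)/s)
      (Real.exp (s/2 - s*x)) x := by
    intro x _
    have h1 : HasDerivAt (fun y : ℝ => s/2 - s*y) (-s) x := by
      simpa using (HasDerivAt.const_sub (s/2) ((hasDerivAt_id x).const_mul s))
    have h2 := (Real.hasDerivAt_exp (s/2 - s*x)).comp x h1
    have h3 := (h2.div_const s).neg
    have h4 : (fun y => -Real.exp (s/2 - s*y)/s) = fun x => -((Real.exp ∘ fun y => s/2 - s*y) x / s) := by
      funext y; simp [neg_div]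
    rw [h4]
    convert h3 using 1
    · rfl
    · rfl
    · rfl
    rw [mul_neg, neg_div, neg_neg, mul_div_assoc, div_self hs.ne', mul_one]
  rw [MeasureTheory.integral_Icc_eq_integral_Ioc,
    ← intervalIntegral.integral_of_le (by norm_num : (0:ℝ) ≤ 1)]
  rw [intervalIntegral.integral_eq_sub_of_hasDerivAt hderiv
    (Continuous.intervalIntegrable (by continuity) _ _)]
  rw [Real.sinh_eq]
  field_simp
  ring_nf

open ProbabilityTheory in
/-- Let `X₁, …, Xₙ` be independent sub-uniform random variables and let
`X̄ₙ = n⁻¹ ∑ᵢ Xᵢ`.  Then for every `0 ≤ t ≤ 1/2` and every `s > 0`,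
`P(1/2 − X̄ₙ ≥ t) ≤ {2 e^{−s t} sinh(s/2) / s}ⁿ`. -/
theorem subUniform_avg_chernoff {Ω : Type*} [MeasurableSpace Ω] (P : Measure Ω)
    [IsProbabilityMeasure P] (n : ℕ) (hn : 0 < n) (X : Fin n → Ω → ℝ)
    (hmeas : ∀ i, Measurable (X i))
    (hind : iIndepFun X P)
    (hsub : ∀ i, SubUniform P (X i))
    (t : ℝ) (ht0 : 0 ≤ t) (ht1 : t ≤ 1/2) (s : ℝ) (hs : 0 < s) :
    P {ω | 1/2 - (∑ i, X i ω) / n ≥ t} ≤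
      ENNReal.ofReal ((2 * Real.exp (-s * t) * Real.sinh (s / 2) / s) ^ n) := by
  set Y : Fin n → Ω → ℝ := fun i ω => 1/2 - X i ω with hY
  have hYmeas : ∀ i, Measurable (Y i) := fun i => measurable_const.sub (hmeas i)
  have hYind : iIndepFun Y P :=
    hind.comp (fun _ x => 1/2 - x) (fun _ => measurable_const.sub measurable_id)
  -- per-coordinate: integrability and mgf bound
  have hkey : ∀ i, Integrable (fun ω => Real.exp (s * Y i ω)) P ∧
      mgf (Y i) P s ≤ 2 * Real.sinh (s/2) / s := by
    intro i
    have hconv := convexOn_exp_affine (s/2) s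
    have hneg : Integrable (fun ω => max (-(Real.exp (s/2 - s * X i ω))) 0) P := by
      have : (fun ω => max (-(Real.exp (s/2 - s * X i ω))) 0) = fun _ => (0:ℝ) :=
        funext fun ω => max_eq_right (neg_nonpos.mpr (Real.exp_pos _).le)
      rw [this]; exact integrable_const 0
    obtain ⟨hint, hle⟩ := hsub i _ hconv hneg
    have heq : (fun ω => Real.exp (s * Y i ω)) = fun ω => Real.exp (s/2 - s * X i ω) := by
      funext ω; congr 1; simp [hY]; ring
    constructor
    · rw [heq]; exact hint
    · rw [mgf]
      calc ∫ ω, Real.exp (s * Y i ω) ∂P = ∫ ω, Real.exp (s/2 - s * X i ω) ∂P := by rw [heq]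
        _ ≤ ∫ x in Set.Icc (0:ℝ) 1, Real.exp (s/2 - s * x) ∂volume := hle
        _ = 2 * Real.sinh (s/2) / s := integral_exp_affine_Icc hs
  -- the event rewritten in terms of the sum of Y
  have hset : {ω | 1/2 - (∑ i, X i ω) / n ≥ t} = {ω | (n:ℝ) * t ≤ (∑ i, Y i) ω} := by
    ext ω
    have hn' : (0:ℝ) < n := Nat.cast_pos.mpr hn
    have hsum : (∑ i, Y i) ω = (n:ℝ)/2 - ∑ i, X i ω := by
      simp [hY, Finset.sum_sub_distrib, Finset.sum_apply]
      ring
    simp only [Set.mem_setOf_eq, ge_iff_le, hsum]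
    have hdiv : (∑ i, X i ω) / (n:ℝ) * n = ∑ i, X i ω := div_mul_cancel₀ _ hn'.ne'
    constructor <;> intro h <;> nlinarith [hdiv]
  have hSint : Integrable (fun ω => Real.exp (s * (∑ i, Y i) ω)) P :=
    hYind.integrable_exp_mul_sum hYmeas (fun i _ => (hkey i).1)
  have hch := measure_ge_le_exp_mul_mgf (μ := P) (X := ∑ i, Y i) ((n:ℝ) * t) hs.le hSint
  rw [hYind.mgf_sum hYmeas Finset.univ] at hch
  have hprod : ∏ i : Fin n, mgf (Y i) P s ≤ (2 * Real.sinh (s/2) / s) ^ n := by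
    have hc : (2 * Real.sinh (s/2) / s) ^ n = ∏ _i : Fin n, (2 * Real.sinh (s/2) / s) := by
      rw [Finset.prod_const, Finset.card_univ, Fintype.card_fin]
    rw [hc]
    exact Finset.prod_le_prod (fun i _ => mgf_nonneg) (fun i _ => (hkey i).2)
  have hRHS : Real.exp (-s * ((n:ℝ) * t)) * (2 * Real.sinh (s/2) / s) ^ n =
      (2 * Real.exp (-s * t) * Real.sinh (s / 2) / s) ^ n := by
    have h1 : Real.exp (-s * ((n:ℝ) * t)) = Real.exp (-s * t) ^ n := by
      rw [← Real.exp_nat_mul]; congr 1; ring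
    rw [h1, ← mul_pow]; congr 1; ring
  have hfinal : (P {ω | 1/2 - (∑ i, X i ω) / n ≥ t}).toReal ≤
      (2 * Real.exp (-s * t) * Real.sinh (s / 2) / s) ^ n := by
    rw [hset, ← hRHS]
    refine hch.trans (by gcongr)
  calc P {ω | 1/2 - (∑ i, X i ω) / n ≥ t}
      = ENNReal.ofReal (P {ω | 1/2 - (∑ i, X i ω) / n ≥ t}).toReal :=
        (ENNReal.ofReal_toReal (measure_ne_top P _)).symm
    _ ≤ ENNReal.ofReal ((2 * Real.exp (-s * t) * Real.sinh (s / 2) / s) ^ n) :=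
        ENNReal.ofReal_le_ofReal hfinal
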